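/- Let μ be a probability measure on [0,1] and b ≥ 2 an integer. If for every nonzero integer h, Σ_{N=1}^{∞} N^{−3} Σ_{u=1}^{N} Σ_{v=1}^{N} |μ̂(h(b^v − b^u))| < ∞, then for μ-almost every x, the sequence (b^n x)_{n≥1} is uniformly distributed modulo 1 (hence x is normal to base b). -/

import Mathlib

open Filter MeasureTheory

/-- A real sequence is uniformly distributed modulo 1, via Weyl's criterion. -/
def UnifDistMod1 (s : ℕ → ℝ) : Prop :=
  ∀ h : ℤ, h ≠ 0 →
    Tendsto (fun N : ℕ => (1 / (N : ℂ)) *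
      ∑ n ∈ Finset.Icc 1 N, Complex.exp (2 * Real.pi * Complex.I * h * s n))
      atTop (nhds 0)

/-- Normality to base `b` via Wall's characterization. -/
def NormalToBase (b : ℕ) (x : ℝ) : Prop :=
  UnifDistMod1 (fun n => x * (b : ℝ) ^ n)

lemma DEL.integrable_bdd {E : Type*} [NormedAddCommGroup E] {μ : Measure ℝ}
    [IsProbabilityMeasure μ]
    {f : ℝ → E} (hf : Continuous f) (C : ℝ) (hbd : ∀ x, ‖f x‖ ≤ C) : Integrable f μ :=
  (integrable_const C).mono' hf.aestronglyMeasurable (ae_of_all _ hbd)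

/-- Deterministic core of the Davenport–Erdős–LeVeque argument. -/
lemma DEL.key_det (g : ℕ → ℂ)
    (hlip : ∀ N M : ℕ, N ≤ M → ‖g M - g N‖ ≤ (M : ℝ) - N)
    (hs : Summable fun N : ℕ => ((N : ℝ)) ^ (-(3 : ℤ)) * (‖g N‖) ^ 2) :
    Tendsto (fun N : ℕ => (1 / (N : ℂ)) * g N) atTop (nhds 0) := by
  have habs : Tendsto (fun N : ℕ => ‖g N‖ / N) atTop (nhds 0) := by
    rw [NormedAddCommGroup.tendsto_nhds_zero]
    intro ε0 hε0
    set ε : ℝ := min ε0 1 with hεdef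
    have hε : 0 < ε := lt_min hε0 one_pos
    have hε1 : ε ≤ 1 := min_le_right _ _
    have main : ∀ᶠ N : ℕ in atTop, ‖g N‖ / N < ε := by
      by_contra hc
      rw [Filter.not_eventually] at hc
      have hδ : (0:ℝ) < ε ^ 3 / 64 := by positivity
      obtain ⟨s, hvan⟩ := hs.vanishing (Iio_mem_nhds hδ)
      obtain ⟨N, hNge, hNbig⟩ := (frequently_atTop.mp hc) (s.sup id + 1)
      push_neg at hNbig
      have hN1 : 1 ≤ N := le_trans (Nat.le_add_left 1 _) hNge
      have hNpos : (0:ℝ) < N := by exact_mod_cast hN1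
      have hgN : ε * N ≤ ‖g N‖ := by
        rw [le_div_iff₀ hNpos] at hNbig; exact hNbig
      set K : ℕ := ⌊ε * N / 2⌋₊ with hKdef
      have hKle : (K : ℝ) ≤ ε * N / 2 := Nat.floor_le (by positivity)
      have hKlt : ε * N / 2 < K + 1 := Nat.lt_floor_add_one _
      set t : Finset ℕ := Finset.Icc N (N + K) with htdef
      have hdisj : Disjoint t s := by
        rw [Finset.disjoint_left]
        intro m hm hms
        have h1 : N ≤ m := (Finset.mem_Icc.mp hm).1
        have h2 : m ≤ s.sup id := Finset.le_sup (f := id) hms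
        omega
      have hsum_lt := hvan t hdisj
      rw [Set.mem_Iio] at hsum_lt
      have hterm : ∀ M ∈ t,
          ε ^ 2 / (32 * N) ≤ ((M : ℝ)) ^ (-(3 : ℤ)) * (‖g M‖) ^ 2 := by
        intro M hM
        obtain ⟨hM1, hM2⟩ := Finset.mem_Icc.mp hM
        have hMN : (M : ℝ) - N ≤ ε * N / 2 := by
          have : (M : ℝ) ≤ N + K := by exact_mod_cast hM2
          linarith
        have hgM : ε * N / 2 ≤ ‖g M‖ := by
          have h3 := hlip N M hM1
          have h4 : ‖g N‖ - ‖g M‖ ≤ ‖g M - g N‖ := by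
            simpa [norm_sub_rev (g M) (g N)] using
              norm_sub_norm_le (g N) (g M)
          linarith
        have hM2N : (M : ℝ) ≤ 2 * N := by
          have : ε * N / 2 ≤ N / 2 := by nlinarith
          have hMN' : (M : ℝ) ≤ N + K := by exact_mod_cast hM2
          linarith
        have hMpos : (0:ℝ) < M := lt_of_lt_of_le hNpos (by exact_mod_cast hM1)
        have hzp : ((M : ℝ)) ^ (-(3 : ℤ)) = ((M:ℝ) ^ 3)⁻¹ := by
          rw [zpow_neg]; norm_cast
        rw [hzp]
        have h5 : ((2 * (N:ℝ)) ^ 3)⁻¹ ≤ ((M:ℝ) ^ 3)⁻¹ := by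
          apply inv_anti₀ (by positivity)
          exact pow_le_pow_left₀ (le_of_lt hMpos) hM2N 3
        have h6 : (ε * N / 2) ^ 2 ≤ (‖g M‖) ^ 2 :=
          pow_le_pow_left₀ (by positivity) hgM 2
        calc ε ^ 2 / (32 * N) = ((2 * (N:ℝ)) ^ 3)⁻¹ * (ε * N / 2) ^ 2 := by
              field_simp; ring
          _ ≤ ((M:ℝ) ^ 3)⁻¹ * (‖g M‖) ^ 2 :=
              mul_le_mul h5 h6 (by positivity) (by positivity)
      have hcard : t.card = K + 1 := by
        rw [htdef, Nat.card_Icc]; omega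
      have hlb : (K + 1 : ℝ) * (ε ^ 2 / (32 * N))
          ≤ ∑ M ∈ t, ((M : ℝ)) ^ (-(3 : ℤ)) * (‖g M‖) ^ 2 := by
        have := Finset.card_nsmul_le_sum t _ _ hterm
        rw [hcard] at this
        simpa [nsmul_eq_mul] using this
      have hfinal : ε ^ 3 / 64
          ≤ ∑ M ∈ t, ((M : ℝ)) ^ (-(3 : ℤ)) * (‖g M‖) ^ 2 := by
        refine le_trans ?_ hlb
        have heq : ε * N / 2 * (ε ^ 2 / (32 * N)) = ε ^ 3 / 64 := by
          field_simp; ring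
        rw [← heq]
        exact mul_le_mul_of_nonneg_right (le_of_lt hKlt) (by positivity)
      linarith
    filter_upwards [main] with N hN
    have : ‖‖g N‖ / N‖ = ‖g N‖ / N := by
      rw [Real.norm_eq_abs, abs_of_nonneg (by positivity)]
    rw [this]
    exact lt_of_lt_of_le hN (min_le_left _ _)
  rw [tendsto_zero_iff_norm_tendsto_zero]
  refine habs.congr (fun N => ?_)
  simp [norm_mul, div_eq_mul_inv, mul_comm]

theorem davenport_erdos_leveque (μ : Measure ℝ) [IsProbabilityMeasure μ]
    (hsupp : μ (Set.Icc (0 : ℝ) 1)ᶜ = 0)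
    (b : ℕ) (hb : 2 ≤ b)
    (hsum : ∀ h : ℤ, h ≠ 0 →
      Summable (fun N : ℕ => (N : ℝ) ^ (-(3 : ℤ)) *
        ∑ u ∈ Finset.Icc 1 N, ∑ v ∈ Finset.Icc 1 N,
          ‖∫ x : ℝ, Complex.exp
            (2 * Real.pi * Complex.I * (h * ((b : ℤ) ^ v - (b : ℤ) ^ u)) * x) ∂μ‖)) :
    ∀ᵐ x ∂μ, UnifDistMod1 (fun n => x * (b : ℝ) ^ n) ∧ NormalToBase b x := by
  have main : ∀ h : ℤ, h ≠ 0 → ∀ᵐ x ∂μ,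
      Tendsto (fun N : ℕ => (1 / (N : ℂ)) *
        ∑ n ∈ Finset.Icc 1 N,
          Complex.exp (2 * Real.pi * Complex.I * h * ((x * (b:ℝ)^n : ℝ) : ℂ)))
        atTop (nhds 0) := by
    intro h hh
    set f : ℕ → ℝ → ℂ :=
      fun n x => Complex.exp (2 * Real.pi * Complex.I * h * ((x * (b:ℝ)^n : ℝ) : ℂ)) with hfdef
    set Ee : ℕ → ℕ → ℝ → ℂ := fun u v x => Complex.exp
      (2 * Real.pi * Complex.I * (h * ((b : ℤ) ^ v - (b : ℤ) ^ u)) * x) with hEdef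
    set S : ℕ → ℝ → ℂ := fun N x => ∑ n ∈ Finset.Icc 1 N, f n x with hSdef
    set A : ℕ → ℝ := fun N => ∑ u ∈ Finset.Icc 1 N, ∑ v ∈ Finset.Icc 1 N,
      ‖∫ x : ℝ, Ee u v x ∂μ‖ with hAdef
    have hEcont : ∀ u v, Continuous (Ee u v) := by
      intro u v
      exact Complex.continuous_exp.comp (continuous_const.mul Complex.continuous_ofReal)
    have hEabs : ∀ u v x, ‖Ee u v x‖ = 1 := by
      intro u v x
      have heq : (2 * (Real.pi:ℂ) * Complex.I * (h * ((b : ℤ) ^ v - (b : ℤ) ^ u)) * x)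
          = ((2 * Real.pi * ((h * ((b : ℤ) ^ v - (b : ℤ) ^ u) : ℤ) : ℝ) * x : ℝ) : ℂ)
            * Complex.I := by
        push_cast; ring
      rw [hEdef]; simp only []; rw [heq, Complex.norm_exp_ofReal_mul_I]
    have hEint : ∀ u v, Integrable (Ee u v) μ := fun u v =>
      DEL.integrable_bdd (hEcont u v) 1 (fun x => le_of_eq (hEabs u v x))
    have hfcont : ∀ n, Continuous (fun x => f n x) := by
      intro n
      exact Complex.continuous_exp.comp (continuous_const.mul
        (Complex.continuous_ofReal.comp (continuous_id.mul continuous_const)))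
    have hfabs : ∀ n x, ‖f n x‖ = 1 := by
      intro n x
      have heq : (2 * (Real.pi:ℂ) * Complex.I * h * ((x * (b:ℝ)^n : ℝ) : ℂ))
          = ((2 * Real.pi * (h:ℝ) * (x * (b:ℝ)^n) : ℝ) : ℂ) * Complex.I := by
        push_cast; ring
      rw [hfdef]; simp only []; rw [heq, Complex.norm_exp_ofReal_mul_I]
    have hScont : ∀ N, Continuous (S N) := fun N =>
      continuous_finset_sum _ (fun n _ => hfcont n)
    have hSbd : ∀ N x, ‖S N x‖ ≤ N := by
      intro N x
      calc ‖S N x‖ ≤ ∑ n ∈ Finset.Icc 1 N, ‖f n x‖ := norm_sum_le _ _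
        _ ≤ ∑ n ∈ Finset.Icc 1 N, 1 := by
            apply Finset.sum_le_sum; intro n _
            rw [hfabs]
        _ ≤ N := by simp [Nat.card_Icc]
    -- variance bound
    have hvar : ∀ N, ∫ x, (‖S N x‖) ^ 2 ∂μ ≤ A N := by
      intro N
      have hpt : ∀ x, S N x * (starRingEnd ℂ) (S N x)
          = ∑ u ∈ Finset.Icc 1 N, ∑ v ∈ Finset.Icc 1 N, Ee u v x := by
        intro x
        rw [hSdef]; simp only []
        rw [mul_comm, map_sum, Finset.sum_mul_sum]
        apply Finset.sum_congr rfl; intro u _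
        apply Finset.sum_congr rfl; intro v _
        rw [hfdef, hEdef]; simp only []
        rw [← Complex.exp_conj, ← Complex.exp_add]
        congr 1
        simp only [map_mul, Complex.conj_I, Complex.conj_ofReal, map_ofNat, map_intCast]
        push_cast
        ring
      have hSSint : Integrable (fun x => S N x * (starRingEnd ℂ) (S N x)) μ := by
        apply DEL.integrable_bdd ((hScont N).mul (Complex.continuous_conj.comp (hScont N)))
          ((N:ℝ) * N)
        intro x
        simp only [Pi.mul_apply, norm_mul, Function.comp_apply, RCLike.norm_conj, Complex.norm_conj]
        exact mul_le_mul (hSbd N x) (hSbd N x) (norm_nonneg _) (Nat.cast_nonneg _)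
      have h1 : ∫ x, (‖S N x‖) ^ 2 ∂μ
          = Complex.re (∫ x, S N x * (starRingEnd ℂ) (S N x) ∂μ) := by
        rw [← RCLike.re_to_complex, ← integral_re hSSint]
        congr 1; funext x
        simp [RCLike.re_to_complex, Complex.mul_conj, ← Complex.sq_norm]
        norm_cast
      have h2 : ∫ x, S N x * (starRingEnd ℂ) (S N x) ∂μ
          = ∑ u ∈ Finset.Icc 1 N, ∑ v ∈ Finset.Icc 1 N, ∫ x, Ee u v x ∂μ := by
        rw [show (fun x => S N x * (starRingEnd ℂ) (S N x))
            = fun x => ∑ u ∈ Finset.Icc 1 N, ∑ v ∈ Finset.Icc 1 N, Ee u v x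
          from funext hpt]
        rw [integral_finset_sum _ (fun u _ => integrable_finset_sum _ (fun v _ => hEint u v))]
        exact Finset.sum_congr rfl fun u _ => integral_finset_sum _ (fun v _ => hEint u v)
      rw [h1, h2, hAdef]
      calc Complex.re (∑ u ∈ Finset.Icc 1 N, ∑ v ∈ Finset.Icc 1 N, ∫ x, Ee u v x ∂μ)
          ≤ ‖∑ u ∈ Finset.Icc 1 N, ∑ v ∈ Finset.Icc 1 N, ∫ x, Ee u v x ∂μ‖ :=
            Complex.re_le_norm _
        _ ≤ ∑ u ∈ Finset.Icc 1 N, ‖∑ v ∈ Finset.Icc 1 N, ∫ x, Ee u v x ∂μ‖ :=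
            norm_sum_le _ _
        _ ≤ ∑ u ∈ Finset.Icc 1 N, ∑ v ∈ Finset.Icc 1 N, ‖∫ x, Ee u v x ∂μ‖ :=
            Finset.sum_le_sum fun u _ => norm_sum_le _ _
    -- Tonelli / Borel-Cantelli type step
    have hcsum : Summable (fun N : ℕ => (N : ℝ) ^ (-(3 : ℤ)) * A N) := hsum h hh
    have hAnn : ∀ N, 0 ≤ A N := fun N =>
      Finset.sum_nonneg fun u _ => Finset.sum_nonneg fun v _ => norm_nonneg _
    have hznn : ∀ N : ℕ, (0:ℝ) ≤ (N : ℝ) ^ (-(3 : ℤ)) := fun N =>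
      zpow_nonneg (Nat.cast_nonneg N) _
    have key : ∀ᵐ x ∂μ,
        Summable (fun N : ℕ => (N : ℝ) ^ (-(3 : ℤ)) * (‖S N x‖) ^ 2) := by
      set F : ℕ → ℝ → ENNReal := fun N x =>
        ENNReal.ofReal ((N : ℝ) ^ (-(3 : ℤ)) * (‖S N x‖) ^ 2) with hFdef
      have hptnn : ∀ (N : ℕ) (x : ℝ), (0:ℝ) ≤ (N : ℝ) ^ (-(3 : ℤ)) * (‖S N x‖) ^ 2 :=
        fun N x => mul_nonneg (hznn N) (sq_nonneg _)
      have hFmeas : ∀ N, Measurable (F N) := by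
        intro N
        apply ENNReal.measurable_ofReal.comp
        exact (continuous_const.mul ((continuous_norm.comp (hScont N)).pow 2)).measurable
      have haint : ∀ N : ℕ, Integrable
          (fun x => (N : ℝ) ^ (-(3 : ℤ)) * (‖S N x‖) ^ 2) μ := by
        intro N
        apply Integrable.const_mul
        apply DEL.integrable_bdd ((continuous_norm.comp (hScont N)).pow 2) ((N:ℝ)^2)
        intro x
        rw [Real.norm_eq_abs, abs_of_nonneg (sq_nonneg _)]
        exact pow_le_pow_left₀ (norm_nonneg _)
          (hSbd N x) 2
      have hFint : ∀ N : ℕ, ∫⁻ x, F N x ∂μ ≤ ENNReal.ofReal ((N : ℝ) ^ (-(3 : ℤ)) * A N) := by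
        intro N
        rw [hFdef]; simp only []
        rw [← ofReal_integral_eq_lintegral_ofReal (haint N) (ae_of_all _ (hptnn N))]
        apply ENNReal.ofReal_le_ofReal
        rw [integral_const_mul]
        exact mul_le_mul_of_nonneg_left (hvar N) (hznn N)
      have htot : ∫⁻ x, ∑' N, F N x ∂μ < ⊤ := by
        rw [lintegral_tsum (fun N => (hFmeas N).aemeasurable)]
        calc ∑' N, ∫⁻ x, F N x ∂μ
            ≤ ∑' N : ℕ, ENNReal.ofReal ((N : ℝ) ^ (-(3 : ℤ)) * A N) := ENNReal.tsum_le_tsum hFint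
          _ = ENNReal.ofReal (∑' N : ℕ, (N : ℝ) ^ (-(3 : ℤ)) * A N) :=
              (ENNReal.ofReal_tsum_of_nonneg (fun N => mul_nonneg (hznn N) (hAnn N)) hcsum).symm
          _ < ⊤ := ENNReal.ofReal_lt_top
      have hae := ae_lt_top' (AEMeasurable.ennreal_tsum fun N => (hFmeas N).aemeasurable) htot.ne
      filter_upwards [hae] with x hx
      have hsummF := ENNReal.summable_toReal hx.ne
      refine hsummF.congr fun N => ?_
      rw [hFdef]; simp only []
      rw [ENNReal.toReal_ofReal (hptnn N x)]
    filter_upwards [key] with x hx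
    have hlip : ∀ N M : ℕ, N ≤ M → ‖S M x - S N x‖ ≤ (M : ℝ) - N := by
      intro N M hNM
      have hsplit : S M x - S N x = ∑ n ∈ Finset.Ioc N M, f n x := by
        rw [hSdef]; simp only []
        rw [show Finset.Icc 1 M = Finset.Ioc 0 M from Finset.Icc_add_one_left_eq_Ioc 0 M,
            show Finset.Icc 1 N = Finset.Ioc 0 N from Finset.Icc_add_one_left_eq_Ioc 0 N,
            ← Finset.sum_Ioc_consecutive _ (Nat.zero_le N) hNM]
        ring
      rw [hsplit]
      calc ‖∑ n ∈ Finset.Ioc N M, f n x‖ ≤ ∑ n ∈ Finset.Ioc N M, ‖f n x‖ := norm_sum_le _ _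
        _ = ∑ n ∈ Finset.Ioc N M, 1 := by
            apply Finset.sum_congr rfl; intro n _
            rw [hfabs]
        _ = ((M - N : ℕ) : ℝ) := by simp [Nat.card_Ioc]
        _ = (M : ℝ) - N := by rw [Nat.cast_sub hNM]
    exact DEL.key_det (fun N => S N x) hlip hx
  have allh : ∀ᵐ x ∂μ, ∀ h : ℤ, h ≠ 0 →
      Tendsto (fun N : ℕ => (1 / (N : ℂ)) *
        ∑ n ∈ Finset.Icc 1 N,
          Complex.exp (2 * Real.pi * Complex.I * h * ((x * (b:ℝ)^n : ℝ) : ℂ)))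
        atTop (nhds 0) := by
    rw [ae_all_iff]
    intro h
    by_cases hh : h = 0
    · exact ae_of_all _ fun x h0 => absurd hh h0
    · filter_upwards [main h hh] with x hx using fun _ => hx
  filter_upwards [allh] with x hx
  exact ⟨fun h hh => hx h hh, fun h hh => hx h hh⟩
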